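/- Let d ≥ 1, α > 0, and let S ⊂ ℤ^d be a nonempty finite set, k ∈ ℤ^d. Then the sum over i ∈ ℤ^d of (1 + |i - k|)^{-(2d+α)} · (1 + dist(S, i))^{-(d+α/2)} is bounded by C · (1 + dist(S, k))^{-(d+α/2)}, where C depends only on d and α. -/

import Mathlib

open Real

lemma summable_int_one_add_abs {r : ℝ} (hr : 1 < r) :
    Summable (fun n : ℤ => (1 + |(n : ℝ)|) ^ (-r)) := by
  have hnat : Summable (fun n : ℕ => (1 + (n : ℝ)) ^ (-r)) := by
    have h0 := Real.summable_one_div_nat_rpow.2 hr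
    have h1 := (summable_nat_add_iff 1).2 h0
    refine h1.congr fun n => ?_
    rw [Real.rpow_neg (by positivity), one_div]
    push_cast
    ring_nf
  refine Summable.of_nat_of_neg (hnat.congr fun n => by simp) (hnat.congr fun n => by simp)

lemma summable_pi_prod (h : ℤ → ℝ) (hh : Summable h) (hpos : ∀ n, 0 ≤ h n) (d : ℕ) :
    Summable (fun i : Fin d → ℤ => ∏ j, h (i j)) := by
  induction d with
  | zero => exact Summable.of_finite
  | succ n ih =>
    rw [← (Fin.consEquiv (fun _ : Fin (n + 1) => ℤ)).summable_iff]
    have : ((fun i : Fin (n+1) → ℤ => ∏ j, h (i j)) ∘ (Fin.consEquiv (fun _ => ℤ))) =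
        fun x : ℤ × (Fin n → ℤ) => h x.1 * ∏ j, h (x.2 j) := by
      funext x
      simp [Fin.consEquiv, Fin.prod_univ_succ]
    rw [this]
    apply Summable.mul_of_nonneg hh ih (fun y => hpos y)
      (fun y => Finset.prod_nonneg fun j _ => hpos _)

lemma summable_japanese (d : ℕ) (hd : 1 ≤ d) (p : ℝ) (hp : (d : ℝ) < p) :
    Summable (fun i : Fin d → ℤ => (1 + ‖i‖) ^ (-p)) := by
  have hd0 : (0 : ℝ) < d := by exact_mod_cast hd
  set r : ℝ := p / d with hrdef
  have hr : 1 < r := (one_lt_div hd0).2 hp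
  have hsum := (summable_int_one_add_abs hr)
  have hprod := summable_pi_prod _ hsum (fun n => Real.rpow_nonneg (by positivity) _) d
  refine Summable.of_nonneg_of_le (fun i => Real.rpow_nonneg (by positivity) _) (fun i => ?_) hprod
  have h1 : ∀ j : Fin d, (0:ℝ) < 1 + |(i j : ℝ)| := fun j => by positivity
  have hprodle : ∏ j, (1 + |(i j : ℝ)|) ≤ (1 + ‖i‖) ^ d := by
    calc ∏ j, (1 + |(i j : ℝ)|) ≤ ∏ _j : Fin d, (1 + ‖i‖) := by
          refine Finset.prod_le_prod (fun j _ => (h1 j).le) (fun j _ => ?_)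
          have := norm_le_pi_norm i j
          rw [Int.norm_eq_abs] at this
          linarith
      _ = (1 + ‖i‖) ^ d := by rw [Finset.prod_const, Finset.card_univ, Fintype.card_fin]
  have hpos : (0:ℝ) < ∏ j, (1 + |(i j : ℝ)|) := Finset.prod_pos fun j _ => h1 j
  calc (1 + ‖i‖) ^ (-p) = ((1 + ‖i‖) ^ (d:ℝ)) ^ (-r) := by
        rw [← Real.rpow_mul (by positivity)]
        rw [hrdef]
        congr 1
        field_simp
    _ ≤ (∏ j, (1 + |(i j : ℝ)|)) ^ (-r) := by
        apply Real.rpow_le_rpow_of_nonpos hpos _ (by linarith)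
        rw [Real.rpow_natCast]
        exact hprodle
    _ = ∏ j, (1 + |(i j : ℝ)|) ^ (-r) := by
        rw [← Real.finset_prod_rpow _ _ (fun j _ => (h1 j).le)]

theorem convolution_decay_estimate (d : ℕ) (hd : 1 ≤ d) (α : ℝ) (hα : 0 < α) :
    ∃ C : ℝ, 0 < C ∧ ∀ (S : Finset (Fin d → ℤ)) (hS : S.Nonempty) (k : Fin d → ℤ),
      Summable (fun i : Fin d → ℤ =>
        (1 + ‖i - k‖) ^ (-(2 * (d : ℝ) + α)) *
          (1 + S.inf' hS fun s => ‖s - i‖) ^ (-((d : ℝ) + α / 2))) ∧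
      ∑' i : Fin d → ℤ,
          (1 + ‖i - k‖) ^ (-(2 * (d : ℝ) + α)) *
            (1 + S.inf' hS fun s => ‖s - i‖) ^ (-((d : ℝ) + α / 2))
        ≤ C * (1 + S.inf' hS fun s => ‖s - k‖) ^ (-((d : ℝ) + α / 2)) := by
  set p : ℝ := (d : ℝ) + α / 2 with hpdef
  have hp : (d : ℝ) < p := by simp [hpdef]; linarith
  have hppos : 0 < p := lt_of_le_of_lt (Nat.cast_nonneg d) hp
  have hsum0 : Summable (fun i : Fin d → ℤ => (1 + ‖i‖) ^ (-p)) := summable_japanese d hd p hp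
  refine ⟨∑' i : Fin d → ℤ, (1 + ‖i‖) ^ (-p), ?_, ?_⟩
  · refine Summable.tsum_pos hsum0 (fun i => Real.rpow_nonneg (by positivity) _) 0 ?_
    exact Real.rpow_pos_of_pos (by positivity) _
  intro S hS k
  have hbnn : ∀ i : Fin d → ℤ, 0 ≤ S.inf' hS fun s => ‖s - i‖ :=
    fun i => Finset.le_inf' hS _ (fun s _ => norm_nonneg _)
  have htri : ∀ i : Fin d → ℤ,
      (S.inf' hS fun s => ‖s - k‖) ≤ (S.inf' hS fun s => ‖s - i‖) + ‖i - k‖ := by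
    intro i
    obtain ⟨s, hs, hsi⟩ := Finset.exists_mem_eq_inf' hS (fun s => ‖s - i‖)
    calc (S.inf' hS fun s => ‖s - k‖) ≤ ‖s - k‖ := Finset.inf'_le _ hs
      _ ≤ ‖s - i‖ + ‖i - k‖ := by
          have : s - k = (s - i) + (i - k) := by abel
          rw [this]; exact norm_add_le _ _
      _ = (S.inf' hS fun s => ‖s - i‖) + ‖i - k‖ := by rw [hsi]
  have hpt : ∀ i : Fin d → ℤ,
      (1 + ‖i - k‖) ^ (-(2 * (d : ℝ) + α)) *
          (1 + S.inf' hS fun s => ‖s - i‖) ^ (-p)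
        ≤ (1 + ‖i - k‖) ^ (-p) * (1 + S.inf' hS fun s => ‖s - k‖) ^ (-p) := by
    intro i
    set a := ‖i - k‖ with ha
    set b := S.inf' hS fun s => ‖s - i‖
    set c := S.inf' hS fun s => ‖s - k‖
    have ha0 : 0 ≤ a := norm_nonneg _
    have hb0 : 0 ≤ b := hbnn i
    have hc0 : 0 ≤ c := hbnn k
    have key : 1 + c ≤ (1 + a) * (1 + b) := by nlinarith [htri i]
    have h1a : (0:ℝ) < 1 + a := by linarith
    have h1b : (0:ℝ) < 1 + b := by linarith
    have h1c : (0:ℝ) < 1 + c := by linarith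
    have e1 : (1 + a) ^ (-(2 * (d : ℝ) + α)) = (1 + a) ^ (-p) * (1 + a) ^ (-p) := by
      rw [← Real.rpow_add h1a]
      congr 1
      rw [hpdef]; ring
    have e2 : ((1 + a) * (1 + b)) ^ (-p) = (1 + a) ^ (-p) * (1 + b) ^ (-p) :=
      Real.mul_rpow h1a.le h1b.le
    have e3 : ((1 + a) * (1 + b)) ^ (-p) ≤ (1 + c) ^ (-p) :=
      Real.rpow_le_rpow_of_nonpos h1c key (neg_nonpos.2 hppos.le)
    calc (1 + a) ^ (-(2 * (d : ℝ) + α)) * (1 + b) ^ (-p)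
        = (1 + a) ^ (-p) * ((1 + a) * (1 + b)) ^ (-p) := by rw [e1, e2]; ring
      _ ≤ (1 + a) ^ (-p) * (1 + c) ^ (-p) := by
          exact mul_le_mul_of_nonneg_left e3 (Real.rpow_nonneg h1a.le _)
  have hshift : Summable (fun i : Fin d → ℤ => (1 + ‖i - k‖) ^ (-p)) := by
    have := ((Equiv.subRight k).summable_iff
      (f := fun x : Fin d → ℤ => (1 + ‖x‖) ^ (-p))).2 hsum0
    exact this.congr fun i => by simp [Equiv.subRight]
  have hbd : Summable (fun i : Fin d → ℤ =>
      (1 + ‖i - k‖) ^ (-p) * (1 + S.inf' hS fun s => ‖s - k‖) ^ (-p)) :=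
    hshift.mul_right _
  have hmain : Summable (fun i : Fin d → ℤ =>
      (1 + ‖i - k‖) ^ (-(2 * (d : ℝ) + α)) *
        (1 + S.inf' hS fun s => ‖s - i‖) ^ (-p)) :=
    Summable.of_nonneg_of_le
      (fun i => mul_nonneg (Real.rpow_nonneg (by positivity) _)
        (Real.rpow_nonneg (by linarith [hbnn i]) _)) hpt hbd
  refine ⟨hmain, ?_⟩
  have hts : ∑' i : Fin d → ℤ, (1 + ‖i - k‖) ^ (-p) = ∑' i : Fin d → ℤ, (1 + ‖i‖) ^ (-p) := by
    have := (Equiv.subRight k).tsum_eq (f := fun x : Fin d → ℤ => (1 + ‖x‖) ^ (-p))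
    rw [← this]
    exact tsum_congr fun i => by simp [Equiv.subRight]
  calc ∑' i : Fin d → ℤ, (1 + ‖i - k‖) ^ (-(2 * (d : ℝ) + α)) *
          (1 + S.inf' hS fun s => ‖s - i‖) ^ (-p)
      ≤ ∑' i : Fin d → ℤ, (1 + ‖i - k‖) ^ (-p) *
          (1 + S.inf' hS fun s => ‖s - k‖) ^ (-p) := Summable.tsum_le_tsum hpt hmain hbd
    _ = (∑' i : Fin d → ℤ, (1 + ‖i - k‖) ^ (-p)) *
          (1 + S.inf' hS fun s => ‖s - k‖) ^ (-p) := tsum_mul_right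
    _ = (∑' i : Fin d → ℤ, (1 + ‖i‖) ^ (-p)) *
          (1 + S.inf' hS fun s => ‖s - k‖) ^ (-p) := by rw [hts]
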